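/- Let X be a graph, G a group, α a voltage assignment, I = {I_v} finite subgroups of G, Y^{unr} = X(G,α), Y = X(G,I,α), with all graphs locally finite, and ι_*: Div(Y^{unr}) -> Div(Y) the surjective pushforward induced by the immersion ι. Then for all v ∈ V_X and σ ∈ G: L_Y(ι_*((v,σ))) = Σ_{i ∈ I_v} ι_*(L_{Y^{unr}}((v, σ·i))). -/

import Mathlib

/-- A graph in Serre's formalism. -/
structure SerreGraph where
  V : Type
  E : Type
  o : E → V
  t : E → V
  inv : E → E
  inv_ne : ∀ e, inv e ≠ e
  inv_inv : ∀ e, inv (inv e) = e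
  o_inv : ∀ e, o (inv e) = t e

namespace SerreGraph

variable (X : SerreGraph)

/-- `Adj a b` : there is a directed edge from `a` to `b`. -/
def Adj (a b : X.V) : Prop := ∃ e, X.o e = a ∧ X.t e = b

/-- A graph is connected if any two vertices are joined by a path of directed edges. -/
def Connected : Prop := ∀ a b : X.V, Relation.ReflTransGen X.Adj a b

/-- The degree (sum of coefficients) map `s : Div(X) → ℤ`. -/
noncomputable def degMap : (X.V →₀ ℤ) →ₗ[ℤ] ℤ :=
  Finsupp.lsum ℤ fun _ => (LinearMap.id : ℤ →ₗ[ℤ] ℤ)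

/-- The valency of a vertex: the number of directed edges with origin `v`. -/
noncomputable def val (v : X.V) : ℕ := Nat.card {e : X.E // X.o e = v}

/-- The Laplacian operator `L = D - A` on `Div(X)`, the free abelian group on vertices. -/
noncomputable def lap : (X.V →₀ ℤ) →ₗ[ℤ] (X.V →₀ ℤ) :=
  Finsupp.lsum ℤ fun v => LinearMap.toSpanSingleton ℤ _
    ((X.val v : ℤ) • Finsupp.single v (1 : ℤ)
      - ∑ᶠ e : {e : X.E // X.o e = v}, Finsupp.single (X.t e.1) (1 : ℤ))

/-- The degree operator `D` on `Div(X)`. -/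
noncomputable def degOp : (X.V →₀ ℤ) →ₗ[ℤ] (X.V →₀ ℤ) :=
  Finsupp.lsum ℤ fun v => LinearMap.toSpanSingleton ℤ _
    ((X.val v : ℤ) • Finsupp.single v (1 : ℤ))

/-- The adjacency operator `A` on `Div(X)`. -/
noncomputable def adjOp : (X.V →₀ ℤ) →ₗ[ℤ] (X.V →₀ ℤ) :=
  Finsupp.lsum ℤ fun v => LinearMap.toSpanSingleton ℤ _
    (∑ᶠ e : {e : X.E // X.o e = v}, Finsupp.single (X.t e.1) (1 : ℤ))

/-- Degree-zero divisors. -/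
noncomputable def Div0 : Submodule ℤ (X.V →₀ ℤ) := LinearMap.ker X.degMap

/-- Principal divisors: the image of the Laplacian. -/
noncomputable def Pr : Submodule ℤ (X.V →₀ ℤ) := LinearMap.range X.lap

/-- The Picard group of degree zero: `Div⁰(X)/Pr(X)`. -/
noncomputable def Pic0 := X.Div0 ⧸ X.Pr.comap X.Div0.subtype

noncomputable instance : AddCommGroup X.Pic0 :=
  inferInstanceAs (AddCommGroup (X.Div0 ⧸ X.Pr.comap X.Div0.subtype))

noncomputable instance : Module ℤ X.Pic0 :=
  inferInstanceAs (Module ℤ (X.Div0 ⧸ X.Pr.comap X.Div0.subtype))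

/-- Morphisms of graphs in Serre's formalism. -/
structure Hom (Y X : SerreGraph) where
  fV : Y.V → X.V
  fE : Y.E → X.E
  o_map : ∀ e, X.o (fE e) = fV (Y.o e)
  t_map : ∀ e, X.t (fE e) = fV (Y.t e)
  inv_map : ∀ e, X.inv (fE e) = fE (Y.inv e)

/-- A branched cover with ramification indices `m`: surjective on vertices and
directed edges, and over each edge at `f(w)` the fiber in the edges at `w`
has cardinality `m w`. -/
def IsBranchedCover {Y X : SerreGraph} (f : Hom Y X) (m : Y.V → ℕ) : Prop :=
  Function.Surjective f.fV ∧ Function.Surjective f.fE ∧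
    ∀ (w : Y.V) (e : X.E), X.o e = f.fV w →
      Nat.card {ε : Y.E // Y.o ε = w ∧ f.fE ε = e} = m w

/-- The pushforward `f_* : Div(Y) → Div(X)`, sending a vertex `w` to `f(w)`. -/
noncomputable def pushforward {Y X : SerreGraph} (f : Hom Y X) :
    (Y.V →₀ ℤ) →ₗ[ℤ] (X.V →₀ ℤ) :=
  Finsupp.lmapDomain ℤ ℤ f.fV

end SerreGraph
namespace SerreGraph

variable (X : SerreGraph) (G : Type) [Group G]

/-- The derived graph `X(G, I, α)` of a voltage assignment `α` with a family of
subgroups `I`. -/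
def Derived (I : X.V → Subgroup G) (α : X.E → G)
    (hα : ∀ e, α (X.inv e) = (α e)⁻¹) : SerreGraph where
  V := Σ v : X.V, G ⧸ I v
  E := X.E × G
  o := fun ε => ⟨X.o ε.1, QuotientGroup.mk ε.2⟩
  t := fun ε => ⟨X.t ε.1, QuotientGroup.mk (ε.2 * α ε.1)⟩
  inv := fun ε => (X.inv ε.1, ε.2 * α ε.1)
  inv_ne := fun ε h => X.inv_ne ε.1 (congrArg Prod.fst h)
  inv_inv := fun ε => by
    have h1 := X.inv_inv ε.1
    have h2 := hα ε.1
    simp [h1, h2, mul_assoc]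
  o_inv := fun ε =>
    congrArg (fun p => (⟨p, QuotientGroup.mk (ε.2 * α ε.1)⟩ : Σ v : X.V, G ⧸ I v))
      (X.o_inv ε.1)

/-- The natural projection `X(G, I, α) → X` is a morphism of graphs. -/
def derivedProj (I : X.V → Subgroup G) (α : X.E → G)
    (hα : ∀ e, α (X.inv e) = (α e)⁻¹) : Hom (X.Derived G I α hα) X where
  fV := fun w => w.1
  fE := fun ε => ε.1
  o_map := fun _ => rfl
  t_map := fun _ => rfl
  inv_map := fun _ => rfl

end SerreGraph
namespace SerreGraph

variable (X : SerreGraph) (G : Type) [Group G]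

/-- The unramified derived graph `X(G, α)` of a voltage assignment (all subgroups trivial). -/
def DerivedU (α : X.E → G) (hα : ∀ e, α (X.inv e) = (α e)⁻¹) : SerreGraph where
  V := X.V × G
  E := X.E × G
  o := fun ε => (X.o ε.1, ε.2)
  t := fun ε => (X.t ε.1, ε.2 * α ε.1)
  inv := fun ε => (X.inv ε.1, ε.2 * α ε.1)
  inv_ne := fun ε h => X.inv_ne ε.1 (congrArg Prod.fst h)
  inv_inv := fun ε => by
    have h1 := X.inv_inv ε.1
    have h2 := hα ε.1
    simp [h1, h2, mul_assoc]
  o_inv := fun ε => by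
    have h := X.o_inv ε.1
    simp [h]

/-- The natural immersion `ι : X(G, α) → X(G, I, α)`, `(v, σ) ↦ (v, σ I_v)` on vertices. -/
def iotaV (I : X.V → Subgroup G) (α : X.E → G) (hα : ∀ e, α (X.inv e) = (α e)⁻¹) :
    (X.DerivedU G α hα).V → (X.Derived G I α hα).V :=
  fun w => ⟨w.1, QuotientGroup.mk w.2⟩

end SerreGraph

lemma SerreGraph.lap_single (X : SerreGraph) (w : X.V) :
    X.lap (Finsupp.single w (1 : ℤ)) =
      (X.val w : ℤ) • Finsupp.single w (1 : ℤ)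
        - ∑ᶠ e : {e : X.E // X.o e = w}, Finsupp.single (X.t e.1) (1 : ℤ) := by
  rw [SerreGraph.lap, Finsupp.lsum_single, LinearMap.toSpanSingleton_apply, one_smul]

open SerreGraph in
/-- (Useful lemma.) With `Y^unr = X(G,α)`, `Y = X(G,I,α)` locally finite,
all `I_v` finite, and `ι_* : Div(Y^unr) → Div(Y)` the pushforward of the immersion `ι`, one
has, for all `v ∈ V_X` and `σ ∈ G`:
`L_Y(ι_*((v,σ))) = Σ_{i ∈ I_v} ι_*(L_{Y^unr}((v, σ·i)))`. -/
theorem lap_iota_pushforward (X : SerreGraph) (G : Type) [Group G]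
    (I : X.V → Subgroup G) (α : X.E → G) (hα : ∀ e, α (X.inv e) = (α e)⁻¹)
    [∀ w, Finite {ε : (X.DerivedU G α hα).E // (X.DerivedU G α hα).o ε = w}]
    [∀ w, Finite {ε : (X.Derived G I α hα).E // (X.Derived G I α hα).o ε = w}]
    [∀ v : X.V, Finite (I v)] :
    ∀ (v : X.V) (σ : G),
      (X.Derived G I α hα).lap
          (Finsupp.mapDomain (X.iotaV G I α hα) (Finsupp.single ((v, σ) :
            (X.DerivedU G α hα).V) (1 : ℤ)))
        = ∑ᶠ i : (I v),
            Finsupp.mapDomain (X.iotaV G I α hα)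
              ((X.DerivedU G α hα).lap (Finsupp.single ((v, σ * (i : G)) :
                (X.DerivedU G α hα).V) (1 : ℤ))) := by
  classical
  intro v σ
  set Yu := X.DerivedU G α hα with hYu
  set Y := X.Derived G I α hα with hY
  set ι := X.iotaV G I α hα with hι
  set w : Y.V := ⟨v, (σ : G ⧸ I v)⟩ with hw
  -- the fiber of edges over `v` in `X`
  set Fib := {e : X.E // X.o e = v} with hFib
  -- the equivalence between edges of `Yu` at `(v, τ)` and `Fib`
  let eYu : ∀ τ : G, {ε : Yu.E // Yu.o ε = (v, τ)} ≃ Fib := fun τ =>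
    { toFun := fun ε => ⟨ε.1.1, congrArg Prod.fst ε.2⟩
      invFun := fun e => ⟨(e.1, τ), by
        show ((X.o e.1, τ) : X.V × G) = (v, τ)
        rw [e.2]⟩
      left_inv := fun ε => by
        obtain ⟨⟨e, g⟩, h⟩ := ε
        have hg : g = τ := congrArg Prod.snd h
        subst hg; rfl
      right_inv := fun e => rfl }
  haveI : Finite Fib := @Finite.of_equiv _ _
    ((inferInstance : ∀ w : Yu.V, Finite {ε : Yu.E // Yu.o ε = w}) (v, σ)) (eYu σ)
  haveI : Fintype Fib := Fintype.ofFinite Fib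
  haveI : ∀ τ : G, Fintype {ε : Yu.E // Yu.o ε = (v, τ)} := fun τ =>
    @Fintype.ofFinite _ ((inferInstance : ∀ w : Yu.V, Finite {ε : Yu.E // Yu.o ε = w}) (v, τ))
  haveI : Fintype {ε : Y.E // Y.o ε = w} := Fintype.ofFinite _
  haveI : Fintype (I v) := Fintype.ofFinite _
  -- data extracted from an edge of `Y` at `w`
  have mem_of : ∀ ε : Y.E, Y.o ε = w → X.o ε.1 = v ∧ σ⁻¹ * ε.2 ∈ I v := by
    rintro ⟨e, g⟩ h
    have h1 : X.o e = v := congrArg Sigma.fst h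
    refine ⟨h1, ?_⟩
    subst h1
    have h2 : (QuotientGroup.mk g : G ⧸ I (X.o e)) = QuotientGroup.mk σ :=
      eq_of_heq (Sigma.mk.inj_iff.mp h).2
    exact (QuotientGroup.eq).mp h2.symm
  -- the equivalence between edges of `Y` at `w` and `I v × Fib`
  let eY : {ε : Y.E // Y.o ε = w} ≃ (I v) × Fib :=
    { toFun := fun ε =>
        (⟨σ⁻¹ * ε.1.2, (mem_of ε.1 ε.2).2⟩, ⟨ε.1.1, (mem_of ε.1 ε.2).1⟩)
      invFun := fun p =>
        ⟨(p.2.1, σ * p.1.1), by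
          obtain ⟨⟨i, hi⟩, ⟨e, he⟩⟩ := p
          show (⟨X.o e, (QuotientGroup.mk (σ * i) : G ⧸ I (X.o e))⟩ : Y.V) = w
          subst he
          rw [QuotientGroup.mk_mul_of_mem σ hi]⟩
      left_inv := fun ε => by
        apply Subtype.ext
        show (ε.1.1, σ * (σ⁻¹ * ε.1.2)) = ε.1
        rw [mul_inv_cancel_left]
        rfl
      right_inv := fun p => by
        obtain ⟨⟨i, hi⟩, ⟨e, he⟩⟩ := p
        refine Prod.ext (Subtype.ext ?_) rfl
        show σ⁻¹ * (σ * i) = i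
        rw [inv_mul_cancel_left] }
  -- valencies
  have hvalYu : ∀ τ : G, Yu.val (v, τ) = Nat.card Fib := fun τ =>
    Nat.card_congr (eYu τ)
  have hvalY : Y.val w = Nat.card (I v) * Nat.card Fib := by
    rw [SerreGraph.val, Nat.card_congr eY, Nat.card_prod]
  -- rewrite both sides via `lap_single` and `mapDomain`
  erw [Finsupp.mapDomain_single, show ι ((v, σ) : Yu.V) = w from rfl, Y.lap_single]
  have hmd : ∀ i : I v,
      Finsupp.mapDomain ι (Yu.lap (Finsupp.single ((v, σ * (i : G)) : Yu.V) (1 : ℤ)))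
        = (Nat.card Fib : ℤ) • Finsupp.single w (1 : ℤ)
          - ∑ e : Fib, Finsupp.single (Y.t (e.1, σ * (i : G))) (1 : ℤ) := by
    intro i
    erw [Yu.lap_single, finsum_eq_sum_of_fintype]
    rw [← Finsupp.lmapDomain_apply ℤ ℤ ι, map_sub, map_smul, map_sum]
    simp only [Finsupp.lmapDomain_apply, Finsupp.mapDomain_single]
    have h1 : ι ((v, σ * (i : G)) : Yu.V) = w := by
      show (⟨v, (QuotientGroup.mk (σ * (i : G)) : G ⧸ I v)⟩ : Y.V) = w
      rw [QuotientGroup.mk_mul_of_mem σ i.2]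
    erw [Finsupp.mapDomain_single, h1, hvalYu]
    congr 1
    rw [← Equiv.sum_comp (eYu (σ * (i : G)))
      (fun e : Fib => Finsupp.single (Y.t (e.1, σ * (i : G))) (1 : ℤ))]
    apply Finset.sum_congr rfl
    rintro ⟨⟨e, g⟩, h⟩ _
    have hg : g = σ * (i : G) := congrArg Prod.snd h
    subst hg
    rfl
  rw [finsum_eq_sum_of_fintype, finsum_eq_sum_of_fintype]
  erw [Finset.sum_congr rfl (fun i (_ : i ∈ Finset.univ) => hmd i)]
  rw [Finset.sum_sub_distrib]
  congr 1
  · rw [Finset.sum_const, Finset.card_univ, hvalY, Nat.cast_mul, mul_smul,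
      Nat.cast_smul_eq_nsmul, Nat.card_eq_fintype_card]
  · rw [← Equiv.sum_comp eY.symm (fun ε : {ε : Y.E // Y.o ε = w} =>
      Finsupp.single (Y.t ε.1) (1 : ℤ)), Fintype.sum_prod_type]
    rfl
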